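/- Let m : ℂ → ℂ be a bounded holomorphic function on the right half-plane {z : Re z > 0}, continuous on the closure, and let Φ : ℝ → ℂ be an integrable function supported in [0, ∞) whose Fourier transform satisfies Φ̂(v) = m(iv) for all real v. Then for every λ > 0, ∫₀^∞ e^{-λu} Φ(u) du = m(λ). -/

import Mathlib

open MeasureTheory Complex Set

private lemma normexp_aux (z : ℂ) (u : ℝ) :
    ‖Complex.exp (-z * u)‖ = Real.exp (-(z.re * u)) := by
  rw [Complex.norm_exp]
  congr 1
  simp [Complex.mul_re]

private lemma bound_one (z : ℂ) (hz : 0 ≤ z.re) (u : ℝ) (hu : 0 ≤ u) (Φ : ℝ → ℂ) :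
    ‖Complex.exp (-z * u) * Φ u‖ ≤ ‖Φ u‖ := by
  rw [norm_mul, normexp_aux]
  have h1 : Real.exp (-(z.re * u)) ≤ 1 := by
    rw [Real.exp_le_one_iff]
    nlinarith
  nlinarith [norm_nonneg (Φ u), Real.exp_pos (-(z.re * u))]

/-- If `m` is a bounded holomorphic function on the right half-plane,
continuous up to the boundary, and `Φ : ℝ → ℂ` is integrable, supported in `[0, ∞)`,
with Fourier transform `Φ̂(v) = ∫ e^{-iuv} Φ(u) du = m(iv)` for all real `v`, then
for every `λ > 0` the Laplace transform of `Φ` at `λ` equals `m(λ)`. -/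
theorem laplace_transform_recovers_multiplier
    (m : ℂ → ℂ) (B : ℝ)
    (hol : DifferentiableOn ℂ m {z : ℂ | 0 < z.re})
    (hbdd : ∀ z : ℂ, 0 < z.re → ‖m z‖ ≤ B)
    (hcont : ContinuousOn m {z : ℂ | 0 ≤ z.re})
    (Φ : ℝ → ℂ) (hΦint : Integrable Φ)
    (hsupp : ∀ t : ℝ, t < 0 → Φ t = 0)
    (hFT : ∀ v : ℝ, ∫ u : ℝ, Complex.exp (-(Complex.I * u * v)) * Φ u = m (Complex.I * v)) :
    ∀ lam : ℝ, 0 < lam →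
      ∫ u in Ioi (0 : ℝ), Complex.exp (-(lam : ℂ) * u) * Φ u = m lam := by
  intro lam hlam
  set F : ℂ → ℂ := fun z => ∫ u in Ioi (0 : ℝ), Complex.exp (-z * u) * Φ u with hFdef
  -- measurability
  have meas : ∀ z : ℂ, AEStronglyMeasurable (fun u : ℝ => Complex.exp (-z * u) * Φ u)
      (volume.restrict (Ioi (0 : ℝ))) := by
    intro z
    refine AEStronglyMeasurable.mul ?_ hΦint.aestronglyMeasurable.restrict
    exact ((continuous_const.mul Complex.continuous_ofReal).cexp).aestronglyMeasurable
  have aebound : ∀ z : ℂ, 0 ≤ z.re →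
      (∀ᵐ u : ℝ ∂(volume.restrict (Ioi (0 : ℝ))), ‖Complex.exp (-z * ↑u) * Φ u‖ ≤ ‖Φ u‖) := by
    intro z hz
    exact (ae_restrict_iff' measurableSet_Ioi).2
      (Filter.Eventually.of_forall fun u hu => bound_one z hz u hu.le Φ)
  have intble : ∀ z : ℂ, 0 ≤ z.re →
      Integrable (fun u : ℝ => Complex.exp (-z * u) * Φ u) (volume.restrict (Ioi (0 : ℝ))) := by
    intro z hz
    exact Integrable.mono' (hΦint.norm.restrict) (meas z) (aebound z hz)
  -- uniform bound for F
  set K : ℝ := (∫ u : ℝ, ‖Φ u‖) + B with hKdef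
  have Fbound : ∀ z : ℂ, 0 ≤ z.re → ‖F z‖ ≤ ∫ u : ℝ, ‖Φ u‖ := by
    intro z hz
    calc ‖F z‖ ≤ ∫ u in Ioi (0 : ℝ), ‖Φ u‖ :=
          norm_integral_le_of_norm_le hΦint.norm.restrict (aebound z hz)
      _ ≤ ∫ u : ℝ, ‖Φ u‖ :=
          setIntegral_le_integral hΦint.norm (Filter.Eventually.of_forall fun u => norm_nonneg _)
  -- continuity of F on the closed half-plane
  have Fcont : ContinuousOn F {z : ℂ | 0 ≤ z.re} := by
    intro z₀ hz₀
    refine continuousWithinAt_of_dominated (bound := fun u => ‖Φ u‖) ?_ ?_ hΦint.norm.restrict ?_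
    · exact Filter.Eventually.of_forall meas
    · filter_upwards [self_mem_nhdsWithin] with z hz
      exact aebound z hz
    · refine Filter.Eventually.of_forall fun u => ?_
      exact (((continuous_id.neg.mul continuous_const).cexp).mul
        continuous_const).continuousWithinAt
  -- differentiability of F on the open half-plane
  have Fdiff : DifferentiableOn ℂ F {z : ℂ | 0 < z.re} := by
    intro z₀ hz₀
    have hz₀' : (0 : ℝ) < z₀.re := hz₀
    set ε : ℝ := z₀.re / 2 with hεdef
    have hε : 0 < ε := by positivity
    set G' : ℂ → ℝ → ℂ := fun z u => Complex.exp (-z * u) * (-(u : ℂ)) * Φ u with hG'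
    have hmeas' : AEStronglyMeasurable (G' z₀) (volume.restrict (Ioi (0 : ℝ))) := by
      refine AEStronglyMeasurable.mul ?_ hΦint.aestronglyMeasurable.restrict
      refine Continuous.aestronglyMeasurable ?_
      exact ((continuous_const.mul Complex.continuous_ofReal).cexp).mul
        (Complex.continuous_ofReal.neg)
    have hbnd : ∀ᵐ u : ℝ ∂(volume.restrict (Ioi (0 : ℝ))),
        ∀ z ∈ Metric.ball z₀ ε, ‖G' z u‖ ≤ ε⁻¹ * ‖Φ u‖ := by
      refine (ae_restrict_iff' measurableSet_Ioi).2
        (Filter.Eventually.of_forall fun u hu => fun z hz => ?_)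
      have hu0 : (0 : ℝ) < u := hu
      have hre : ε < z.re := by
        have h1 : |z.re - z₀.re| ≤ ‖z - z₀‖ := by
          simpa using Complex.abs_re_le_norm (z - z₀)
        have h2 : ‖z - z₀‖ < ε := by
          rw [Metric.mem_ball, Complex.dist_eq] at hz
          exact hz
        have h3 := neg_le_of_abs_le h1
        have hεz : z₀.re = 2 * ε := by rw [hεdef]; ring
        linarith
      rw [hG']
      simp only
      rw [norm_mul, norm_mul, normexp_aux]
      have hnu : ‖(-(u : ℂ))‖ = u := by
        rw [norm_neg, Complex.norm_real, Real.norm_eq_abs, _root_.abs_of_nonneg hu0.le]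
      rw [hnu]
      have h2 : ε * u ≤ Real.exp (ε * u) := by
        have := Real.add_one_le_exp (ε * u)
        linarith
      have hone : Real.exp (-(ε * u)) * (ε * u) ≤ 1 := by
        have := mul_le_mul_of_nonneg_left h2 (Real.exp_nonneg (-(ε * u)))
        calc Real.exp (-(ε * u)) * (ε * u) ≤ Real.exp (-(ε * u)) * Real.exp (ε * u) := this
          _ = 1 := by rw [← Real.exp_add]; simp
      have h3 : Real.exp (-(ε * u)) * u ≤ ε⁻¹ := by
        rw [inv_eq_one_div, le_div_iff₀ hε]
        nlinarith
      have h1 : Real.exp (-(z.re * u)) ≤ Real.exp (-(ε * u)) := by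
        apply Real.exp_le_exp.2
        nlinarith
      have hkey : Real.exp (-(z.re * u)) * u ≤ ε⁻¹ := by
        calc Real.exp (-(z.re * u)) * u ≤ Real.exp (-(ε * u)) * u := by nlinarith
          _ ≤ ε⁻¹ := h3
      nlinarith [norm_nonneg (Φ u), Real.exp_pos (-(z.re * u))]
    have hdiff : ∀ᵐ u : ℝ ∂(volume.restrict (Ioi (0 : ℝ))),
        ∀ z ∈ Metric.ball z₀ ε,
          HasDerivAt (fun z : ℂ => Complex.exp (-z * u) * Φ u) (G' z u) z := by
      refine Filter.Eventually.of_forall fun u => fun z _ => ?_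
      have h1 : HasDerivAt (fun z : ℂ => -z * u) (-(u : ℂ)) z := by
        simpa using ((hasDerivAt_id z).neg.mul_const (u : ℂ))
      have h2 : HasDerivAt (fun z : ℂ => Complex.exp (-z * u))
          (Complex.exp (-z * u) * (-(u : ℂ))) z := h1.cexp
      simpa [hG'] using h2.mul_const (Φ u)
    obtain ⟨-, hd⟩ := hasDerivAt_integral_of_dominated_loc_of_deriv_le (Metric.ball_mem_nhds z₀ hε)
      (Filter.Eventually.of_forall meas) (intble z₀ hz₀'.le) hmeas' hbnd
      (hΦint.norm.restrict.const_mul _) hdiff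
    exact hd.differentiableAt.differentiableWithinAt
  -- boundary values
  have hbdry : ∀ x : ℝ, F (x * Complex.I) = m (x * Complex.I) := by
    intro x
    have h0 : ∀ᵐ u : ℝ, u ∉ Ioi (0 : ℝ) → Complex.exp (-(↑x * Complex.I) * u) * Φ u = 0 := by
      have hne : ∀ᵐ u : ℝ, u ≠ 0 := by
        rw [ae_iff]
        simp only [ne_eq, not_not, Set.setOf_eq_eq_singleton]
        exact Real.volume_singleton
      filter_upwards [hne] with u hu hu'
      have : u < 0 := lt_of_le_of_ne (by simpa using hu') hu
      rw [hsupp u this, mul_zero]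
    have heq : F (x * Complex.I) = ∫ u : ℝ, Complex.exp (-(↑x * Complex.I) * u) * Φ u :=
      setIntegral_eq_integral_of_ae_compl_eq_zero h0
    have harg : ∀ u : ℝ, -(↑x * Complex.I) * (u : ℂ) = -(Complex.I * u * x) := fun u => by ring
    have heq2 : (∫ u : ℝ, Complex.exp (-(↑x * Complex.I) * u) * Φ u)
        = ∫ u : ℝ, Complex.exp (-(Complex.I * u * x)) * Φ u := by
      simp only [harg]
    rw [heq, heq2, hFT x, mul_comm]
  -- bound for m on the closed half-plane
  have hbdd' : ∀ z : ℂ, 0 ≤ z.re → ‖m z‖ ≤ B := by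
    intro z hz
    have hzc : z ∈ closure {w : ℂ | 0 < w.re} := by rw [closure_setOf_lt_re]; exact hz
    have hne : (nhdsWithin z {w : ℂ | 0 < w.re}).NeBot := mem_closure_iff_nhdsWithin_neBot.1 hzc
    have hc : ContinuousWithinAt m {w : ℂ | 0 ≤ w.re} z := hcont z hz
    have hc' : Filter.Tendsto m (nhdsWithin z {w : ℂ | 0 < w.re}) (nhds (m z)) :=
      hc.tendsto.mono_left (nhdsWithin_mono z (fun w hw => Set.mem_setOf.2 (le_of_lt (Set.mem_setOf.1 hw))))
    refine le_of_tendsto hc'.norm ?_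
    filter_upwards [self_mem_nhdsWithin] with w hw
    exact hbdd w hw
  -- the difference
  set g : ℂ → ℂ := fun z => F z - m z with hgdef
  have hg0 : ∀ z : ℂ, 0 ≤ z.re → ‖g z‖ ≤ 0 := by
    intro z hz
    refine PhragmenLindelof.right_half_plane_of_bounded_on_real ?_ ?_ ?_ ?_ hz
    · constructor
      · exact Fdiff.sub hol
      · rw [closure_setOf_lt_re]
        exact Fcont.sub hcont
    · refine ⟨1, one_lt_two, 0, ?_⟩
      rw [Asymptotics.isBigO_iff]
      refine ⟨K, ?_⟩
      rw [Filter.eventually_inf_principal]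
      refine Filter.Eventually.of_forall fun z hz => ?_
      have hz' : (0 : ℝ) < z.re := hz
      have h1 : ‖g z‖ ≤ K := by
        have := Fbound z hz'.le
        have h2 : ‖m z‖ ≤ B := hbdd' z hz'.le
        calc ‖g z‖ ≤ ‖F z‖ + ‖m z‖ := norm_sub_le _ _
          _ ≤ K := by rw [hKdef]; linarith
      simpa using h1
    · refine ⟨K, ?_⟩
      rw [Filter.eventually_map]
      filter_upwards [Filter.eventually_ge_atTop (0 : ℝ)] with x hx
      have hre : (0 : ℝ) ≤ ((x : ℂ)).re := by simpa using hx
      calc ‖g (x : ℂ)‖ ≤ ‖F (x : ℂ)‖ + ‖m (x : ℂ)‖ := norm_sub_le _ _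
        _ ≤ K := by rw [hKdef]; linarith [Fbound (x : ℂ) hre, hbdd' (x : ℂ) hre]
    · intro x
      have : g (x * Complex.I) = 0 := by
        rw [hgdef]
        simp only
        rw [hbdry x, sub_self]
      rw [this, norm_zero]
  have hlam' : (0 : ℝ) ≤ ((lam : ℂ)).re := by simpa using hlam.le
  have := hg0 (lam : ℂ) hlam'
  have hgz : g (lam : ℂ) = 0 := norm_le_zero_iff.1 this
  have : F (lam : ℂ) = m (lam : ℂ) := sub_eq_zero.1 hgz
  simpa [hFdef] using this
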